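/- Let K be a field and let m, n, d be positive integers with d ≤ min(m,n). Suppose C is a K-linear subspace of the space of m×n matrices over K such that every nonzero matrix in C has rank at least d and dim_K C = max(m,n)·(min(m,n) − d + 1) (i.e., C is MRD with minimum rank distance d). Then the dual code C^⊥ = {X ∈ K^{m×n} : Tr(X·Yᵀ) = 0 for all Y ∈ C} has dim_K C^⊥ = mn − max(m,n)·(min(m,n) − d + 1), and every nonzero matrix in C^⊥ has rank at least min(m,n) − d + 2; that is, C^⊥ is again MRD. -/

import Mathlib

open Matrix

/-- The dual of a rank-metric code with respect to the trace-product
`(X, Y) ↦ Tr(X * Yᵀ)`. -/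
def dualCode {K : Type*} [Field K] {m n : ℕ}
    (C : Submodule K (Matrix (Fin m) (Fin n) K)) :
    Submodule K (Matrix (Fin m) (Fin n) K) where
  carrier := {X | ∀ Y ∈ C, Matrix.trace (X * Yᵀ) = 0}
  add_mem' := by
    intro a b ha hb Y hY
    simp [Matrix.add_mul, ha Y hY, hb Y hY]
  zero_mem' := by
    intro Y hY
    simp
  smul_mem' := by
    intro c a ha Y hY
    simp [Matrix.smul_mul, ha Y hY]

section Aux
open Module
variable {K : Type*} [Field K]

noncomputable def trForm (m n : ℕ) :
    Matrix (Fin m) (Fin n) K →ₗ[K] Matrix (Fin m) (Fin n) K →ₗ[K] K :=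
  LinearMap.mk₂ K (fun X Y => Matrix.trace (X * Yᵀ))
    (fun X X' Y => by simp [Matrix.add_mul])
    (fun c X Y => by simp [Matrix.smul_mul])
    (fun X Y Y' => by simp [Matrix.mul_add])
    (fun c X Y => by simp [Matrix.mul_smul])

theorem trForm_apply (m n : ℕ) (X Y : Matrix (Fin m) (Fin n) K) :
    trForm m n X Y = ∑ i, ∑ j, X i j * Y i j := by
  simp [trForm, Matrix.trace, Matrix.diag, Matrix.mul_apply]

theorem trForm_comm (m n : ℕ) (X Y : Matrix (Fin m) (Fin n) K) :
    trForm m n X Y = trForm m n Y X := by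
  simp only [trForm, LinearMap.mk₂_apply]
  rw [← Matrix.trace_transpose, Matrix.transpose_mul, Matrix.transpose_transpose]

theorem trForm_injective (m n : ℕ) : Function.Injective (trForm (K := K) m n) := by
  rw [injective_iff_map_eq_zero]
  intro X hX
  ext i j
  have := congrArg (fun f => f (Matrix.single i j (1:K))) hX
  simp only [trForm_apply, LinearMap.zero_apply] at this
  simp only [Matrix.single, Matrix.of_apply, mul_ite, mul_one, mul_zero] at this
  simp only [show ∀ (x : Fin m) (y : Fin n), (i = x ∧ j = y) = (j = y ∧ i = x) by
    intro x y; rw [and_comm], ite_and, Finset.sum_ite_eq, Finset.mem_univ, if_true] at this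
  rw [Matrix.zero_apply]
  exact this

/-- kernel of the map `x ↦ (w ↦ B x w)` restricted-to-`W` pairing. -/
theorem finrank_ker_pairing {V : Type*} [AddCommGroup V] [Module K V]
    [FiniteDimensional K V] (B : V →ₗ[K] Module.Dual K V)
    (hB : Function.Injective B) (W : Submodule K V) :
    finrank K (LinearMap.ker ((W.subtype.dualMap).comp B)) =
      finrank K V - finrank K W := by
  have hfr : finrank K V = finrank K (Module.Dual K V) := (Subspace.dual_finrank_eq).symm
  have hBsurj : Function.Surjective B :=
    (LinearMap.injective_iff_surjective_of_finrank_eq_finrank hfr).mp hB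
  have hsurj : Function.Surjective ((W.subtype.dualMap).comp B) :=
    (LinearMap.dualMap_surjective_of_injective W.injective_subtype).comp hBsurj
  have h := LinearMap.finrank_range_add_finrank_ker ((W.subtype.dualMap).comp B)
  rw [LinearMap.range_eq_top.mpr hsurj, finrank_top] at h
  have h2 : finrank K (Module.Dual K ↥W) = finrank K W := Subspace.dual_finrank_eq
  omega

/-- A pi-submodule is linearly equivalent to the pi of the submodules. -/
def piSubEquiv {ι : Type*} [Fintype ι] {V : ι → Type*} [∀ i, AddCommGroup (V i)]
    [∀ i, Module K (V i)] (p : ∀ i, Submodule K (V i)) :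
    (Submodule.pi Set.univ p) ≃ₗ[K] (∀ i, p i) where
  toFun x i := ⟨x.1 i, x.2 i (Set.mem_univ i)⟩
  invFun y := ⟨fun i => y i, fun i _ => (y i).2⟩
  left_inv x := rfl
  right_inv y := rfl
  map_add' x y := rfl
  map_smul' c x := rfl

theorem finrank_pi_submodule {ι : Type*} [Fintype ι] {V : ι → Type*}
    [∀ i, AddCommGroup (V i)] [∀ i, Module K (V i)] [∀ i, FiniteDimensional K (V i)]
    (p : ∀ i, Submodule K (V i)) :
    finrank K (Submodule.pi Set.univ p) = ∑ i, finrank K (p i) := by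
  rw [LinearEquiv.finrank_eq (piSubEquiv p), Module.finrank_pi_fintype]

/-- extend a subspace to one of any larger dimension -/
theorem exists_superset_finrank_eq {V : Type*} [AddCommGroup V] [Module K V]
    [FiniteDimensional K V] (R : Submodule K V) (k : ℕ)
    (h1 : finrank K R ≤ k) (h2 : k ≤ finrank K V) :
    ∃ W : Submodule K V, R ≤ W ∧ finrank K W = k := by
  obtain ⟨j, rfl⟩ : ∃ j, k = finrank K R + j := ⟨k - finrank K R, by omega⟩
  clear h1
  induction j generalizing R with
  | zero => exact ⟨R, le_rfl, rfl⟩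
  | succ j ih =>
    have hlt : finrank K R < finrank K V := by omega
    obtain ⟨v, hv⟩ := R.exists_of_finrank_lt hlt
    have hv0 : v ∉ R := by simpa using hv 1 one_ne_zero
    have hvne : v ≠ 0 := fun h => hv0 (h ▸ R.zero_mem)
    have hinf : R ⊓ (K ∙ v) = ⊥ := by
      rw [Submodule.eq_bot_iff]
      rintro x ⟨hxR, hxv⟩
      obtain ⟨r, rfl⟩ := Submodule.mem_span_singleton.mp hxv
      by_contra hx
      exact hv r (fun hr => hx (by simp [hr])) hxR
    have hdim : finrank K ↥(R ⊔ K ∙ v) = finrank K R + 1 := by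
      have := Submodule.finrank_sup_add_finrank_inf_eq R (K ∙ v)
      rw [hinf, finrank_span_singleton hvne] at this
      simpa using this
    obtain ⟨W, hW1, hW2⟩ := ih (R ⊔ K ∙ v) (by omega)
    exact ⟨W, le_trans le_sup_left hW1, by omega⟩

theorem mem_dualCode_iff {m n : ℕ} (C : Submodule K (Matrix (Fin m) (Fin n) K))
    (X : Matrix (Fin m) (Fin n) K) :
    X ∈ dualCode C ↔ ∀ Y ∈ C, Matrix.trace (X * Yᵀ) = 0 := Iff.rfl

noncomputable def dotForm (n : ℕ) : (Fin n → K) →ₗ[K] Module.Dual K (Fin n → K) :=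
  LinearMap.mk₂ K (fun v w => v ⬝ᵥ w)
    (fun v v' w => add_dotProduct v v' w)
    (fun c v w => smul_dotProduct c v w)
    (fun v w w' => dotProduct_add v w w')
    (fun c v w => dotProduct_smul c v w)

theorem dotForm_injective (n : ℕ) : Function.Injective (dotForm (K := K) n) := by
  rw [injective_iff_map_eq_zero]
  intro v hv
  ext j
  have := congrArg (fun f => f (Pi.single j (1 : K))) hv
  simpa [dotForm] using this

theorem finrank_dualCode_eq {m n : ℕ} (C : Submodule K (Matrix (Fin m) (Fin n) K)) :
    finrank K (dualCode C) = m * n - finrank K C := by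
  have hker : dualCode C = LinearMap.ker ((C.subtype.dualMap).comp (trForm m n)) := by
    ext X
    constructor
    · intro hX
      rw [LinearMap.mem_ker]
      ext c
      exact hX c.1 c.2
    · intro hX Y hY
      exact LinearMap.congr_fun (LinearMap.mem_ker.mp hX) ⟨Y, hY⟩
  rw [hker, finrank_ker_pairing (trForm m n) (trForm_injective m n) C]
  congr 1
  rw [Module.finrank_matrix]
  simp

/-- Key lemma: the rank bound for the dual, in the case `n ≤ m`. -/
theorem key_rank_bound {m n d : ℕ} (hd : 0 < d) (hdn : d ≤ n) (hnm : n ≤ m)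
    (C : Submodule K (Matrix (Fin m) (Fin n) K))
    (hC : ∀ A ∈ C, A ≠ 0 → d ≤ A.rank)
    (hdim : finrank K C = m * (n - d + 1)) :
    ∀ X ∈ dualCode C, X ≠ 0 → n - d + 2 ≤ X.rank := by
  intro X hX hX0
  by_contra hcon
  push_neg at hcon
  set k := n - d + 1 with hk
  have hXrank : X.rank ≤ k := by omega
  have hrow : X.rank = finrank K (Submodule.span K (Set.range X)) :=
    Matrix.rank_eq_finrank_span_row X
  have hfrn : finrank K (Fin n → K) = n := by simp
  obtain ⟨W, hRW, hWk⟩ := exists_superset_finrank_eq (Submodule.span K (Set.range X)) k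
    (by omega) (by omega)
  set A : Submodule K (Matrix (Fin m) (Fin n) K) :=
    Submodule.pi Set.univ (fun _ : Fin m => W) with hA
  have hXA : X ∈ A := fun i _ => hRW (Submodule.subset_span (Set.mem_range_self i))
  have hfrA : finrank K A = m * k := by
    have h1 : finrank K A = ∑ _i : Fin m, finrank K W := finrank_pi_submodule _
    rw [h1]
    simp [hWk, Finset.sum_const]
  -- the perp of W under the dot product
  set Wp : Submodule K (Fin n → K) := LinearMap.ker ((W.subtype.dualMap).comp (dotForm n))
    with hWp
  have hfrWp : finrank K Wp = d - 1 := by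
    rw [hWp, finrank_ker_pairing (dotForm n) (dotForm_injective n) W, hfrn, hWk]
    omega
  -- the pairing map C → Dual A
  set φ : C →ₗ[K] Module.Dual K A :=
    (A.subtype.dualMap).comp ((trForm m n).comp C.subtype) with hφ
  have hφinj : Function.Injective φ := by
    rw [← LinearMap.ker_eq_bot, Submodule.eq_bot_iff]
    rintro ⟨c, hc⟩ hker
    rw [LinearMap.mem_ker] at hker
    have hall : ∀ a ∈ A, trForm m n c a = 0 := fun a ha => LinearMap.congr_fun hker ⟨a, ha⟩
    have hrowc : ∀ i, c i ∈ Wp := by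
      intro i
      rw [hWp, LinearMap.mem_ker]
      ext w
      have hsingle : (Pi.single i (w.1) : Matrix (Fin m) (Fin n) K) ∈ A := by
        intro i' _
        rcases eq_or_ne i' i with rfl | hne
        · simpa using w.2
        · simp [Pi.single_eq_of_ne hne, W.zero_mem]
      have h0 := hall _ hsingle
      erw [trForm_apply] at h0
      rw [Finset.sum_eq_single_of_mem i (Finset.mem_univ i)] at h0
      · show (dotForm n) (c i) w.1 = 0
        show (c i) ⬝ᵥ (w.1 : Fin n → K) = 0
        simpa [dotProduct] using h0
      · intro i' _ hne
        simp [Pi.single_eq_of_ne hne]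
    have hspan : Submodule.span K (Set.range c) ≤ Wp := by
      rw [Submodule.span_le]
      rintro _ ⟨i, rfl⟩
      exact hrowc i
    have hrk : c.rank ≤ d - 1 := by
      rw [Matrix.rank_eq_finrank_span_row c, ← hfrWp]
      exact Submodule.finrank_mono hspan
    have hc0 : c = 0 := by
      by_contra hc0
      have := hC c hc hc0
      omega
    exact Subtype.ext hc0
  have hφsurj : Function.Surjective φ := by
    refine (LinearMap.injective_iff_surjective_of_finrank_eq_finrank ?_).mp hφinj
    rw [hdim, Subspace.dual_finrank_eq, hfrA]
  have hXzero : (⟨X, hXA⟩ : A) = 0 := by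
    rw [← Module.forall_dual_apply_eq_zero_iff K]
    intro f
    obtain ⟨c, rfl⟩ := hφsurj f
    show trForm m n c.1 X = 0
    rw [trForm_comm]
    exact hX c.1 c.2
  exact hX0 (by simpa using congrArg Subtype.val hXzero)

end Aux

/-- the dual of an MRD code is MRD. -/
theorem dual_of_MRD_is_MRD (K : Type*) [Field K] (m n d : ℕ)
    (hm : 0 < m) (hn : 0 < n) (hd : 0 < d) (hdmn : d ≤ min m n)
    (C : Submodule K (Matrix (Fin m) (Fin n) K))
    (hC : ∀ A ∈ C, A ≠ 0 → d ≤ A.rank)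
    (hdim : Module.finrank K C = max m n * (min m n - d + 1)) :
    Module.finrank K (dualCode C) = m * n - max m n * (min m n - d + 1) ∧
      ∀ X ∈ dualCode C, X ≠ 0 → min m n - d + 2 ≤ X.rank := by
  constructor
  · rw [finrank_dualCode_eq, hdim]
  · rcases le_total n m with hnm | hmn
    · have hmin : min m n = n := min_eq_right hnm
      have hmax : max m n = m := max_eq_left hnm
      rw [hmin]
      exact key_rank_bound hd (by omega) hnm C hC (by rw [hdim, hmin, hmax])
    · have hmin : min m n = m := min_eq_left hmn
      have hmax : max m n = n := max_eq_right hmn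
      rw [hmin]
      set τ := Matrix.transposeLinearEquiv (Fin m) (Fin n) K K with hτ
      set C' : Submodule K (Matrix (Fin n) (Fin m) K) := C.map (τ : _ →ₗ[K] _) with hC'def
      have hC' : ∀ A ∈ C', A ≠ 0 → d ≤ A.rank := by
        rintro A ⟨B, hB, rfl⟩ hA0
        have : (τ : Matrix (Fin m) (Fin n) K →ₗ[K] Matrix (Fin n) (Fin m) K) B = Bᵀ := rfl
        rw [this] at hA0 ⊢
        rw [Matrix.rank_transpose]
        exact hC B hB (by rintro rfl; simp at hA0)
      have hdim' : Module.finrank K C' = n * (m - d + 1) := by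
        rw [hC'def, LinearEquiv.finrank_map_eq, hdim, hmin, hmax]
      have hkey := key_rank_bound hd (by omega) hmn C' hC' hdim'
      intro X hX hX0
      have hXT : Xᵀ ∈ dualCode C' := by
        rintro Y ⟨B, hB, rfl⟩
        have hτB : (τ : Matrix (Fin m) (Fin n) K →ₗ[K] Matrix (Fin n) (Fin m) K) B = Bᵀ := rfl
        rw [hτB, Matrix.transpose_transpose, ← Matrix.trace_transpose,
          Matrix.transpose_mul, Matrix.transpose_transpose, Matrix.trace_mul_comm]
        exact hX B hB
      have hres := hkey Xᵀ hXT (fun h => hX0 (by simpa using congrArg Matrix.transpose h))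
      rwa [Matrix.rank_transpose] at hres
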